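/- With f_c(r) = 2πλP_c·r·exp(-λP_c·π·r²)/(1 - exp(-λP_c·π·R_th²)) and κ, γ, α positive constants with b := κ·γ^{2/α}, one has ∫₀^{R_th} (1 - exp(-λ·b·π·r²))·f_c(r) dr = 1 - P_c·(1 - exp(-λ(P_c + b)·π·R_th²)) / ((1 - exp(-λP_c·π·R_th²))·(P_c + b)). -/
import Mathlib


open Real

theorem content_outage_probability (lam Pc Rth κ γ α : ℝ)
    (hlam : 0 < lam) (hPc : 0 < Pc) (hPc1 : Pc ≤ 1) (hR : 0 < Rth)
    (hκ : 0 < κ) (hγ : 0 < γ) (hα : 0 < α) :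
    let b := κ * γ ^ (2 / α)
    ∫ r in (0 : ℝ)..Rth,
        (1 - Real.exp (-(lam * b * π * r ^ 2))) *
          (2 * π * lam * Pc * r * Real.exp (-(lam * Pc * π * r ^ 2)) /
            (1 - Real.exp (-(lam * Pc * π * Rth ^ 2)))) =
      1 - Pc * (1 - Real.exp (-(lam * (Pc + b) * π * Rth ^ 2))) /
        ((1 - Real.exp (-(lam * Pc * π * Rth ^ 2))) * (Pc + b)) := by
  intro b
  have hπ : (0:ℝ) < π := Real.pi_pos
  have hb : 0 < b := mul_pos hκ (Real.rpow_pos_of_pos hγ _)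
  have hPcb : 0 < Pc + b := by linarith
  have hD : 0 < 1 - Real.exp (-(lam * Pc * π * Rth ^ 2)) := by
    have h1 : Real.exp (-(lam * Pc * π * Rth ^ 2)) < 1 := by
      rw [Real.exp_lt_one_iff]
      have : 0 < lam * Pc * π * Rth ^ 2 := by positivity
      linarith
    linarith
  set D := 1 - Real.exp (-(lam * Pc * π * Rth ^ 2)) with hDdef
  set F : ℝ → ℝ := fun r =>
    (-Real.exp (-(lam * Pc * π * r ^ 2)) +
      (Pc / (Pc + b)) * Real.exp (-(lam * (Pc + b) * π * r ^ 2))) / D with hF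
  have hderiv : ∀ r ∈ Set.uIcc (0:ℝ) Rth, HasDerivAt F
      ((1 - Real.exp (-(lam * b * π * r ^ 2))) *
        (2 * π * lam * Pc * r * Real.exp (-(lam * Pc * π * r ^ 2)) / D)) r := by
    intro r _
    have hsq : HasDerivAt (fun r : ℝ => r ^ 2) (2 * r) r := by
      simpa using hasDerivAt_pow 2 r
    have e1 : HasDerivAt (fun r : ℝ => Real.exp (-(lam * Pc * π * r ^ 2)))
        (Real.exp (-(lam * Pc * π * r ^ 2)) * (-(lam * Pc * π * (2 * r)))) r :=
      (((hsq.const_mul (lam * Pc * π)).neg).exp)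
    have e2 : HasDerivAt (fun r : ℝ => Real.exp (-(lam * (Pc + b) * π * r ^ 2)))
        (Real.exp (-(lam * (Pc + b) * π * r ^ 2)) * (-(lam * (Pc + b) * π * (2 * r)))) r :=
      (((hsq.const_mul (lam * (Pc + b) * π)).neg).exp)
    have hFd : HasDerivAt F
        ((-(Real.exp (-(lam * Pc * π * r ^ 2)) * (-(lam * Pc * π * (2 * r)))) +
          (Pc / (Pc + b)) * (Real.exp (-(lam * (Pc + b) * π * r ^ 2)) *
            (-(lam * (Pc + b) * π * (2 * r))))) / D) r :=
      (e1.neg.add (e2.const_mul (Pc / (Pc + b)))).div_const D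
    convert hFd using 1
    have hexp : Real.exp (-(lam * (Pc + b) * π * r ^ 2)) =
        Real.exp (-(lam * Pc * π * r ^ 2)) * Real.exp (-(lam * b * π * r ^ 2)) := by
      rw [← Real.exp_add]; ring_nf
    rw [hexp]
    field_simp
    ring
  have hcont : IntervalIntegrable (fun r =>
      (1 - Real.exp (-(lam * b * π * r ^ 2))) *
        (2 * π * lam * Pc * r * Real.exp (-(lam * Pc * π * r ^ 2)) / D))
      MeasureTheory.volume 0 Rth := by
    apply Continuous.intervalIntegrable
    fun_prop
  have hInt := intervalIntegral.integral_eq_sub_of_hasDerivAt hderiv hcont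
  rw [hInt]
  simp only [hF]
  have h0 : Real.exp (-(lam * Pc * π * (0:ℝ) ^ 2)) = 1 := by norm_num
  have h0' : Real.exp (-(lam * (Pc + b) * π * (0:ℝ) ^ 2)) = 1 := by norm_num
  rw [h0, h0']
  field_simp
  ring
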